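/- (Theorem 1) Let Assumptions 1 and 2 hold. Suppose that for all k ∈ ℤ≥0, β_i(k) = β(k) for every i ∈ [n] (homogeneous infection rates) and A(k) is symmetric. If sup_{k ∈ ℤ≥0} ρ(M(k)) < 1, where ρ denotes the spectral radius, then the healthy state x = 0 of the SIS model is globally exponentially stable: there exist α > 0 and ω ∈ [0,1) such that every solution with x(k₀) ∈ [0,1]ⁿ satisfies ‖x(k)‖ ≤ α‖x(k₀)‖ω^{k−k₀} for all k ≥ k₀. -/

import Mathlib

/-- Spectral radius of a real matrix: largest modulus of its complex eigenvalues. -/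
noncomputable def specRad {n : ℕ} (M : Matrix (Fin n) (Fin n) ℝ) : ℝ :=
  sSup {r : ℝ | ∃ μ ∈ spectrum ℂ (M.map Complex.ofReal), r = ‖μ‖}

/-- Euclidean norm on `ℝⁿ`. -/
noncomputable def euclNorm {n : ℕ} (x : Fin n → ℝ) : ℝ := Real.sqrt (∑ i, (x i) ^ 2)

open Matrix

attribute [local instance] Matrix.linftyOpNormedRing Matrix.linftyOpNormedAlgebra

section aux

variable {n : ℕ}

lemma euclNorm_eq_sqrt_dot (x : Fin n → ℝ) : euclNorm x = Real.sqrt (x ⬝ᵥ x) := by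
  simp [euclNorm, dotProduct, sq]

lemma euclNorm_mono {y z : Fin n → ℝ} (h0 : ∀ i, 0 ≤ y i) (h : ∀ i, y i ≤ z i) :
    euclNorm y ≤ euclNorm z := by
  apply Real.sqrt_le_sqrt
  exact Finset.sum_le_sum fun i _ => pow_le_pow_left₀ (h0 i) (h i) 2

lemma unitary_dot {P : Matrix (Fin n) (Fin n) ℝ} (hP : Pᵀ * P = 1) (z : Fin n → ℝ) :
    (P *ᵥ z) ⬝ᵥ (P *ᵥ z) = z ⬝ᵥ z := by
  rw [dotProduct_mulVec, ← mulVec_transpose, mulVec_mulVec, hP, one_mulVec]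

lemma ofReal_mem_spectrum {M : Matrix (Fin n) (Fin n) ℝ} {μ : ℝ}
    (hμ : μ ∈ spectrum ℝ M) : (μ : ℂ) ∈ spectrum ℂ (M.map Complex.ofReal) := by
  rw [spectrum.mem_iff] at hμ ⊢
  intro hu
  apply hμ
  rw [Matrix.isUnit_iff_isUnit_det] at hu ⊢
  have key : (algebraMap ℂ (Matrix (Fin n) (Fin n) ℂ) (μ:ℂ) - M.map Complex.ofReal)
      = (algebraMap ℝ (Matrix (Fin n) (Fin n) ℝ) μ - M).map Complex.ofReal := by
    ext i j
    by_cases hij : i = j <;>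
      simp [hij, Matrix.algebraMap_eq_diagonal, Matrix.diagonal_apply, Matrix.sub_apply,
        Matrix.map_apply]
  rw [key] at hu
  have hdet : (((algebraMap ℝ (Matrix (Fin n) (Fin n) ℝ) μ - M)).map Complex.ofReal).det
      = (((algebraMap ℝ (Matrix (Fin n) (Fin n) ℝ) μ - M)).det : ℂ) := by
    have h2 := RingHom.map_det Complex.ofRealHom (algebraMap ℝ (Matrix (Fin n) (Fin n) ℝ) μ - M)
    rw [RingHom.mapMatrix_apply] at h2
    exact h2.symm
  rw [hdet] at hu
  rw [isUnit_iff_ne_zero] at hu ⊢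
  simpa using hu

lemma abs_eigenvalue_le_specRad {M : Matrix (Fin n) (Fin n) ℝ} (hH : M.IsHermitian) (i : Fin n) :
    |hH.eigenvalues i| ≤ specRad M := by
  have hbdd : BddAbove {r : ℝ | ∃ μ ∈ spectrum ℂ (M.map Complex.ofReal), r = ‖μ‖} := by
    haveI : CompleteSpace (Matrix (Fin n) (Fin n) ℂ) := FiniteDimensional.complete ℂ _
    refine ⟨‖M.map Complex.ofReal‖ * ‖(1 : Matrix (Fin n) (Fin n) ℂ)‖, ?_⟩
    rintro r ⟨μ, hμ, rfl⟩
    have hb := spectrum.norm_le_norm_mul_of_mem hμ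
    exact hb
  refine le_csSup hbdd ⟨(hH.eigenvalues i : ℂ),
    ofReal_mem_spectrum (hH.eigenvalues_mem_spectrum_real i), by simp⟩

lemma mulVec_norm_le {M : Matrix (Fin n) (Fin n) ℝ} (hs : M.IsSymm) {c : ℝ} (hc : 0 ≤ c)
    (hspec : specRad M ≤ c) (v : Fin n → ℝ) :
    euclNorm (M *ᵥ v) ≤ c * euclNorm v := by
  have hH : M.IsHermitian := by
    rw [Matrix.IsHermitian, Matrix.conjTranspose_eq_transpose_of_trivial]; exact hs
  set P : Matrix (Fin n) (Fin n) ℝ := (hH.eigenvectorUnitary : Matrix (Fin n) (Fin n) ℝ) with hPdef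
  have hP1 : P * Pᵀ = 1 := by
    have := Matrix.mem_unitaryGroup_iff.mp hH.eigenvectorUnitary.2
    simpa [star_eq_conjTranspose, conjTranspose_eq_transpose_of_trivial] using this
  have hP2 : Pᵀ * P = 1 := by
    have := Matrix.mem_unitaryGroup_iff'.mp hH.eigenvectorUnitary.2
    simpa [star_eq_conjTranspose, conjTranspose_eq_transpose_of_trivial] using this
  set D : Matrix (Fin n) (Fin n) ℝ := Matrix.diagonal hH.eigenvalues with hDdef
  have hMdec : M = P * D * Pᵀ := by
    have := hH.spectral_theorem
    simpa [star_eq_conjTranspose, conjTranspose_eq_transpose_of_trivial,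
      Function.comp, hDdef] using this
  set w : Fin n → ℝ := Pᵀ *ᵥ v with hwdef
  have hMv : M *ᵥ v = P *ᵥ (D *ᵥ w) := by
    rw [hMdec, hwdef, mulVec_mulVec, mulVec_mulVec]
  have h1 : (M *ᵥ v) ⬝ᵥ (M *ᵥ v) = (D *ᵥ w) ⬝ᵥ (D *ᵥ w) := by
    rw [hMv, unitary_dot hP2]
  have h2 : w ⬝ᵥ w = v ⬝ᵥ v := by
    have hPP : (Pᵀ)ᵀ * Pᵀ = 1 := by rwa [transpose_transpose]
    exact unitary_dot hPP v
  have h3 : (D *ᵥ w) ⬝ᵥ (D *ᵥ w) ≤ c ^ 2 * (w ⬝ᵥ w) := by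
    have hDw : ∀ i, (D *ᵥ w) i = hH.eigenvalues i * w i := fun i => by
      simp [hDdef, mulVec_diagonal]
    simp only [dotProduct, Finset.mul_sum]
    apply Finset.sum_le_sum
    intro i _
    rw [hDw]
    have hb : |hH.eigenvalues i| ≤ c := (abs_eigenvalue_le_specRad hH i).trans hspec
    have : (hH.eigenvalues i) ^ 2 ≤ c ^ 2 := by
      rw [← sq_abs]; exact pow_le_pow_left₀ (abs_nonneg _) hb 2
    nlinarith [sq_nonneg (w i)]
  have hvv : 0 ≤ v ⬝ᵥ v := Finset.sum_nonneg fun i _ => mul_self_nonneg _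
  rw [euclNorm_eq_sqrt_dot, euclNorm_eq_sqrt_dot, h1]
  calc Real.sqrt ((D *ᵥ w) ⬝ᵥ (D *ᵥ w)) ≤ Real.sqrt (c ^ 2 * (v ⬝ᵥ v)) := by
        apply Real.sqrt_le_sqrt; rw [← h2]; exact h3
    _ = c * Real.sqrt (v ⬝ᵥ v) := by
        rw [Real.sqrt_mul (sq_nonneg c), Real.sqrt_sq hc]

end aux

/-- Theorem 1: for homogeneous infection rates over symmetric graphs, under Assumptions 1
and 2, if `sup_k ρ(M(k)) < 1` then the healthy state of the SIS model is GES. -/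
theorem sis_homogeneous_GES
    (n : ℕ) (h : ℝ) (hh : 0 < h)
    (β : ℕ → ℝ) (A : ℕ → Matrix (Fin n) (Fin n) ℝ) (δ : ℕ → Fin n → ℝ)
    (Bbar : ℕ → Matrix (Fin n) (Fin n) ℝ)
    (hBbar : ∀ k, Bbar k = β k • A k)
    -- homogeneous infection rates and symmetric graph
    (hβpos : ∀ k, 0 < β k)
    (hAsym : ∀ k, (A k).IsSymm)
    -- Assumption 1
    (hA1δ : ∀ k i, 0 ≤ h * δ k i)
    (hA1B : ∀ k i j, 0 ≤ Bbar k i j)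
    -- Assumption 2
    (hA2δ : ∀ k i, h * δ k i ≤ 1)
    (hA2B : ∀ k i, h * ∑ j, Bbar k i j ≤ 1)
    -- M(k) = I − hD(k) + hB̄(k)
    (M : ℕ → Matrix (Fin n) (Fin n) ℝ)
    (hM : ∀ k, M k = 1 - h • Matrix.diagonal (δ k) + h • Bbar k)
    -- sup_k ρ(M(k)) < 1
    (hρ : ∃ r : ℝ, r < 1 ∧ ∀ k, specRad (M k) ≤ r) :
    ∃ α : ℝ, 0 < α ∧ ∃ ω : ℝ, 0 ≤ ω ∧ ω < 1 ∧
      ∀ x : ℕ → Fin n → ℝ,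
        (∀ k i, x (k + 1) i =
          x k i + h * ((1 - x k i) * (∑ j, Bbar k i j * x k j) - δ k i * x k i)) →
        ∀ k₀ : ℕ, (∀ i, x k₀ i ∈ Set.Icc (0 : ℝ) 1) →
          ∀ k, k₀ ≤ k → euclNorm (x k) ≤ α * euclNorm (x k₀) * ω ^ (k - k₀) := by
  obtain ⟨r, hr1, hrk⟩ := hρ
  set ω : ℝ := max r 0 with hωdef
  have hω0 : 0 ≤ ω := le_max_right _ _
  have hω1 : ω < 1 := max_lt hr1 zero_lt_one
  have hωspec : ∀ k, specRad (M k) ≤ ω := fun k => (hrk k).trans (le_max_left _ _)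
  have hMsym : ∀ k, (M k).IsSymm := by
    intro k
    have hA' : (A k)ᵀ = A k := hAsym k
    show (M k)ᵀ = M k
    rw [hM k, hBbar k]
    simp [Matrix.transpose_add, Matrix.transpose_sub, Matrix.transpose_smul,
      Matrix.diagonal_transpose, hA']
  refine ⟨1, one_pos, ω, hω0, hω1, ?_⟩
  intro x hx k₀ hx0 k hk
  -- main induction
  have main : ∀ m : ℕ, (∀ i, x (k₀ + m) i ∈ Set.Icc (0:ℝ) 1) ∧
      euclNorm (x (k₀ + m)) ≤ euclNorm (x k₀) * ω ^ m := by
    intro m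
    induction m with
    | zero => exact ⟨hx0, by simp⟩
    | succ m ih =>
      obtain ⟨hbox, hnorm⟩ := ih
      set k' := k₀ + m with hk'def
      set y : Fin n → ℝ := x k' with hydef
      have hy0 : ∀ i, 0 ≤ y i := fun i => (hbox i).1
      have hy1 : ∀ i, y i ≤ 1 := fun i => (hbox i).2
      set S : Fin n → ℝ := fun i => ∑ j, Bbar k' i j * y j with hSdef
      have hS0 : ∀ i, 0 ≤ S i := fun i =>
        Finset.sum_nonneg fun j _ => mul_nonneg (hA1B k' i j) (hy0 j)
      have hhS1 : ∀ i, h * S i ≤ 1 := by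
        intro i
        refine le_trans ?_ (hA2B k' i)
        apply mul_le_mul_of_nonneg_left _ hh.le
        exact Finset.sum_le_sum fun j _ => by
          nlinarith [hA1B k' i j, hy1 j, hy0 j]
      have hnext : ∀ i, x (k' + 1) i = y i + h * ((1 - y i) * S i - δ k' i * y i) :=
        fun i => hx k' i
      have hbox' : ∀ i, x (k' + 1) i ∈ Set.Icc (0:ℝ) 1 := by
        intro i
        have e : x (k' + 1) i = y i * (1 - h * δ k' i) + (1 - y i) * (h * S i) := by
          rw [hnext i]; ring
        constructor
        · rw [e]
          have := hA2δ k' i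
          have := hy0 i
          have := hy1 i
          have := hS0 i
          nlinarith [mul_nonneg hh.le (hS0 i)]
        · rw [e]
          have h1 : y i * (1 - h * δ k' i) ≤ y i := by nlinarith [hA1δ k' i, hy0 i]
          have h2 : (1 - y i) * (h * S i) ≤ 1 - y i := by
            nlinarith [hhS1 i, hy1 i, mul_nonneg hh.le (hS0 i)]
          linarith
      have hMx : ∀ i, (M k' *ᵥ y) i = y i - h * δ k' i * y i + h * S i := by
        intro i
        have hentry : ∀ j, (M k') i j =
            (if i = j then 1 - h * δ k' i else 0) + h * Bbar k' i j := by
          intro j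
          rw [hM k']
          by_cases hij : i = j
          · subst hij; simp [Matrix.one_apply, Matrix.diagonal_apply]
          · simp [Matrix.one_apply, Matrix.diagonal_apply, hij]
        show ∑ j, (M k') i j * y j = _
        simp only [hentry, add_mul, ite_mul, zero_mul]
        rw [Finset.sum_add_distrib, Finset.sum_ite_eq (Finset.univ) i (fun j => (1 - h * δ k' i) * y j)]
        simp [hSdef, Finset.mul_sum, mul_assoc, mul_comm]
        ring_nf
        congr 1
        exact Finset.sum_congr rfl fun j _ => by ring
      have hle : ∀ i, x (k' + 1) i ≤ (M k' *ᵥ y) i := by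
        intro i
        rw [hMx i, hnext i]
        nlinarith [mul_nonneg (mul_nonneg hh.le (hy0 i)) (hS0 i)]
      have step1 : euclNorm (x (k' + 1)) ≤ euclNorm (M k' *ᵥ y) :=
        euclNorm_mono (fun i => (hbox' i).1) hle
      have step2 : euclNorm (M k' *ᵥ y) ≤ ω * euclNorm y :=
        mulVec_norm_le (hMsym k') hω0 (hωspec k') y
      refine ⟨hbox', ?_⟩
      have : euclNorm (x (k' + 1)) ≤ ω * (euclNorm (x k₀) * ω ^ m) :=
        le_trans (le_trans step1 step2) (mul_le_mul_of_nonneg_left hnorm hω0)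
      calc euclNorm (x (k₀ + (m + 1))) = euclNorm (x (k' + 1)) := by rw [hk'def]; ring_nf
        _ ≤ ω * (euclNorm (x k₀) * ω ^ m) := this
        _ = euclNorm (x k₀) * ω ^ (m + 1) := by ring
  obtain ⟨_, hn⟩ := main (k - k₀)
  rw [Nat.add_sub_cancel' hk] at hn
  simpa using hn
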